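/- Let μ, ν : ℕ → ℝ be probability mass functions (nonnegative, summing to 1) with PGFs F(u) = Σ_j μ(j) u^j and G(u) = Σ_l ν(l) u^l. Fix K ∈ ℕ, observations y_1, …, y_K ∈ ℕ, and detection probabilities ρ_1, …, ρ_K ∈ (0, 1). Define sequences recursively: α_0(n) = 1 if n = 0 and 0 otherwise; for k = 1, …, K: γ_k(n) = Σ_{m=0}^∞ α_{k−1}(m) · (μ^{∗m} ∗ ν)(n), and α_k(n) = C(n, y_k) · ρ_k^{y_k} · (1−ρ_k)^{n−y_k} · γ_k(n) for n ≥ y_k, with α_k(n) = 0 for n < y_k. Then every γ_k and α_k is nonnegative and summable, and, denoting A_k(s) = Σ_n α_k(n) s^n and Γ_k(u) = Σ_n γ_k(n) u^n, for every k ∈ {1, …, K}: (i) Γ_k(u) = A_{k−1}(F(u)) · G(u) for all u ∈ [0, 1], and (ii) A_k(s) = ((s·ρ_k)^{y_k} / y_k!) · Γ_k^{(y_k)}(s·(1−ρ_k)) for all s ∈ [0, 1], where Γ_k^{(y_k)} denotes the y_k-th derivative of Γ_k. -/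

import Mathlib

open scoped Nat

/-- Convolution of two sequences: `(a ∗ b)(n) = Σ_{j=0}^{n} a(j) b(n−j)`. -/
noncomputable def seqConv (a b : ℕ → ℝ) (n : ℕ) : ℝ :=
  ∑ j ∈ Finset.range (n + 1), a j * b (n - j)

/-- `m`-fold convolution power: `μ^{∗0} = δ₀` and `μ^{∗(m+1)} = μ^{∗m} ∗ μ`. -/
noncomputable def convPow (μ : ℕ → ℝ) : ℕ → ℕ → ℝ
  | 0 => fun n => if n = 0 then 1 else 0
  | m + 1 => seqConv (convPow μ m) μ

/-- Forward messages of the integer HMM: `(fwd μ ν y ρ k).1 = α_k` and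
`(fwd μ ν y ρ k).2 = γ_k` (the second component at `k = 0` is a dummy).
`α₀ = δ₀`; `γ_k(n) = Σₘ α_{k−1}(m) (μ^{∗m} ∗ ν)(n)`; and
`α_k(n) = C(n, y_k) ρ_k^{y_k} (1−ρ_k)^{n−y_k} γ_k(n)` for `n ≥ y_k`, else `0`. -/
noncomputable def fwd (μ ν : ℕ → ℝ) (y : ℕ → ℕ) (ρ : ℕ → ℝ) : ℕ → (ℕ → ℝ) × (ℕ → ℝ)
  | 0 => (fun n => if n = 0 then 1 else 0, fun _ => 0)
  | k + 1 =>
    let γ : ℕ → ℝ := fun n => ∑' m : ℕ, (fwd μ ν y ρ k).1 m * seqConv (convPow μ m) ν n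
    (fun n =>
      if y (k + 1) ≤ n then
        (n.choose (y (k + 1)) : ℝ) * ρ (k + 1) ^ (y (k + 1)) *
          (1 - ρ (k + 1)) ^ (n - y (k + 1)) * γ n
      else 0,
     γ)

private lemma pgf_summable {a : ℕ → ℝ} (ha : ∀ n, 0 ≤ a n) (hs : Summable a) {u : ℝ}
    (hu0 : 0 ≤ u) (hu1 : u ≤ 1) : Summable (fun n => a n * u ^ n) :=
  Summable.of_nonneg_of_le (fun n => mul_nonneg (ha n) (pow_nonneg hu0 n))
    (fun n => mul_le_of_le_one_right (ha n) (pow_le_one₀ hu0 hu1)) hs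

private lemma seqConv_nonneg {a b : ℕ → ℝ} (ha : ∀ n, 0 ≤ a n) (hb : ∀ n, 0 ≤ b n) (n : ℕ) :
    0 ≤ seqConv a b n :=
  Finset.sum_nonneg fun j _ => mul_nonneg (ha j) (hb (n - j))

private lemma seqConv_pgf {a b : ℕ → ℝ} (ha : ∀ n, 0 ≤ a n) (hb : ∀ n, 0 ≤ b n)
    (hsa : Summable a) (hsb : Summable b) {u : ℝ} (hu0 : 0 ≤ u) (hu1 : u ≤ 1) :
    Summable (fun n => seqConv a b n * u ^ n) ∧
      ∑' n, seqConv a b n * u ^ n = (∑' n, a n * u ^ n) * (∑' n, b n * u ^ n) := by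
  have hfa : Summable fun n => a n * u ^ n := pgf_summable ha hsa hu0 hu1
  have hfb : Summable fun n => b n * u ^ n := pgf_summable hb hsb hu0 hu1
  have hna : Summable fun n => ‖a n * u ^ n‖ := by
    refine hfa.congr fun n => ?_
    rw [Real.norm_eq_abs, abs_of_nonneg (mul_nonneg (ha n) (pow_nonneg hu0 n))]
  have hnb : Summable fun n => ‖b n * u ^ n‖ := by
    refine hfb.congr fun n => ?_
    rw [Real.norm_eq_abs, abs_of_nonneg (mul_nonneg (hb n) (pow_nonneg hu0 n))]
  have key : ∀ n, (∑ k ∈ Finset.range (n + 1), (a k * u ^ k) * (b (n - k) * u ^ (n - k)))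
      = seqConv a b n * u ^ n := by
    intro n
    rw [seqConv, Finset.sum_mul]
    refine Finset.sum_congr rfl fun j hj => ?_
    have hj' : j ≤ n := Nat.lt_succ_iff.mp (Finset.mem_range.mp hj)
    have hpow : u ^ j * u ^ (n - j) = u ^ n := by
      rw [← pow_add, Nat.add_sub_cancel' hj']
    calc a j * u ^ j * (b (n - j) * u ^ (n - j))
        = a j * b (n - j) * (u ^ j * u ^ (n - j)) := by ring
      _ = a j * b (n - j) * u ^ n := by rw [hpow]
  constructor
  · exact (summable_sum_mul_range_of_summable_norm' hna hfa hnb hfb).congr key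
  · calc ∑' n, seqConv a b n * u ^ n
        = ∑' n, ∑ k ∈ Finset.range (n + 1), (a k * u ^ k) * (b (n - k) * u ^ (n - k)) :=
          (tsum_congr key).symm
      _ = (∑' n, a n * u ^ n) * (∑' n, b n * u ^ n) :=
          (tsum_mul_tsum_eq_tsum_sum_range_of_summable_norm hna hnb).symm

private lemma convPow_prop {μ : ℕ → ℝ} (hμ : ∀ n, 0 ≤ μ n) (hs : Summable μ) (m : ℕ) :
    (∀ n, 0 ≤ convPow μ m n) ∧ Summable (convPow μ m) ∧
      ∀ u : ℝ, 0 ≤ u → u ≤ 1 →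
        Summable (fun n => convPow μ m n * u ^ n) ∧
        ∑' n, convPow μ m n * u ^ n = (∑' j : ℕ, μ j * u ^ j) ^ m := by
  induction m with
  | zero =>
    have h0 : convPow μ 0 = fun n => if n = 0 then (1:ℝ) else 0 := rfl
    refine ⟨fun n => by rw [h0]; dsimp only; split <;> norm_num, ?_, ?_⟩
    · refine summable_of_ne_finset_zero (s := {0}) fun n hn => ?_
      rw [h0]; simp at hn ⊢; exact fun h => absurd h hn
    · intro u hu0 hu1
      constructor
      · refine summable_of_ne_finset_zero (s := {0}) fun n hn => ?_
        rw [h0]; simp at hn ⊢; intro h; exact absurd h hn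
      · rw [pow_zero]
        rw [tsum_eq_single 0 (fun n hn => by rw [h0]; simp [hn])]
        rw [h0]; simp
  | succ m ih =>
    obtain ⟨hnn, hsm, hu⟩ := ih
    have hc : convPow μ (m + 1) = seqConv (convPow μ m) μ := rfl
    have hnn' : ∀ n, 0 ≤ convPow μ (m + 1) n := fun n => by
      rw [hc]; exact seqConv_nonneg hnn hμ n
    have hkey : ∀ u : ℝ, 0 ≤ u → u ≤ 1 →
        Summable (fun n => convPow μ (m + 1) n * u ^ n) ∧
        ∑' n, convPow μ (m + 1) n * u ^ n = (∑' j : ℕ, μ j * u ^ j) ^ (m + 1) := by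
      intro u hu0 hu1
      obtain ⟨hsum1, heq1⟩ := seqConv_pgf hnn hμ hsm hs hu0 hu1
      refine ⟨by rw [hc]; exact hsum1, ?_⟩
      rw [hc, heq1, (hu u hu0 hu1).2, pow_succ]
    refine ⟨hnn', ?_, hkey⟩
    have := (hkey 1 zero_le_one le_rfl).1
    exact this.congr fun n => by simp

private lemma gamma_prop {μ ν : ℕ → ℝ} (hμ : ∀ n, 0 ≤ μ n) (hsμ : Summable μ)
    (hμ1 : ∑' j : ℕ, μ j = 1) (hν : ∀ n, 0 ≤ ν n) (hsν : Summable ν)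
    (hν1 : ∑' l : ℕ, ν l = 1)
    {α : ℕ → ℝ} (hα : ∀ n, 0 ≤ α n) (hsα : Summable α) :
    (∀ n, 0 ≤ ∑' m : ℕ, α m * seqConv (convPow μ m) ν n) ∧
    ∀ u : ℝ, 0 ≤ u → u ≤ 1 →
      Summable (fun n => (∑' m : ℕ, α m * seqConv (convPow μ m) ν n) * u ^ n) ∧
      ∑' n, (∑' m : ℕ, α m * seqConv (convPow μ m) ν n) * u ^ n
        = (∑' m : ℕ, α m * (∑' j : ℕ, μ j * u ^ j) ^ m) * (∑' l : ℕ, ν l * u ^ l) := by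
  have hmain : ∀ u : ℝ, 0 ≤ u → u ≤ 1 →
      Summable (fun n => (∑' m : ℕ, α m * seqConv (convPow μ m) ν n) * u ^ n) ∧
      ∑' n, (∑' m : ℕ, α m * seqConv (convPow μ m) ν n) * u ^ n
        = (∑' m : ℕ, α m * (∑' j : ℕ, μ j * u ^ j) ^ m) * (∑' l : ℕ, ν l * u ^ l) := by
    intro u hu0 hu1
    set Fu : ℝ := ∑' j : ℕ, μ j * u ^ j with hFu
    set Gu : ℝ := ∑' l : ℕ, ν l * u ^ l with hGu
    have hF0 : 0 ≤ Fu := tsum_nonneg fun j => mul_nonneg (hμ j) (pow_nonneg hu0 j)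
    have hF1 : Fu ≤ 1 := by
      rw [hFu, ← hμ1]
      exact Summable.tsum_le_tsum (fun j => mul_le_of_le_one_right (hμ j) (pow_le_one₀ hu0 hu1))
        (pgf_summable hμ hsμ hu0 hu1) hsμ
    have hG0 : 0 ≤ Gu := tsum_nonneg fun l => mul_nonneg (hν l) (pow_nonneg hu0 l)
    have hG1 : Gu ≤ 1 := by
      rw [hGu, ← hν1]
      exact Summable.tsum_le_tsum (fun l => mul_le_of_le_one_right (hν l) (pow_le_one₀ hu0 hu1))
        (pgf_summable hν hsν hu0 hu1) hsν
    set h : ℕ → ℕ → ℝ := fun m => seqConv (convPow μ m) ν with hh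
    have hhnn : ∀ m n, 0 ≤ h m n := fun m n =>
      seqConv_nonneg (convPow_prop hμ hsμ m).1 hν n
    have hhs : ∀ m, Summable (fun n => h m n * u ^ n) ∧
        ∑' n, h m n * u ^ n = Fu ^ m * Gu := by
      intro m
      obtain ⟨hnn, hsm, hup⟩ := convPow_prop hμ hsμ m
      obtain ⟨hs1, he1⟩ := seqConv_pgf hnn hν hsm hsν hu0 hu1
      exact ⟨hs1, by rw [he1, (hup u hu0 hu1).2]⟩
    set f : ℕ × ℕ → ℝ := fun p => α p.1 * (h p.1 p.2 * u ^ p.2) with hf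
    have hfnn : (0 : ℕ × ℕ → ℝ) ≤ f := fun p =>
      mul_nonneg (hα p.1) (mul_nonneg (hhnn p.1 p.2) (pow_nonneg hu0 p.2))
    have hrows : ∀ m, Summable fun n => f (m, n) := fun m => ((hhs m).1).mul_left (α m)
    have hrowsum : ∀ m, ∑' n, f (m, n) = α m * (Fu ^ m * Gu) := by
      intro m
      rw [show (fun n => f (m, n)) = fun n => α m * (h m n * u ^ n) from rfl, tsum_mul_left,
        (hhs m).2]
    have hrowsums : Summable fun m => ∑' n, f (m, n) := by
      refine (Summable.of_nonneg_of_le (fun m => ?_) (fun m => ?_) hsα).congr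
        fun m => (hrowsum m).symm
      · exact mul_nonneg (hα m) (mul_nonneg (pow_nonneg hF0 m) hG0)
      · refine mul_le_of_le_one_right (hα m) ?_
        calc Fu ^ m * Gu ≤ 1 * 1 :=
              mul_le_mul (pow_le_one₀ hF0 hF1) hG1 hG0 zero_le_one
          _ = 1 := by ring
    have hsf : Summable f := (summable_prod_of_nonneg hfnn).mpr ⟨hrows, hrowsums⟩
    have hγu : ∀ n, (∑' m : ℕ, α m * h m n) * u ^ n = ∑' m, f (m, n) := by
      intro n
      rw [← tsum_mul_right]
      exact tsum_congr fun m => (mul_assoc _ _ _)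
    have hscol : Summable fun n => (∑' m : ℕ, α m * h m n) * u ^ n := by
      refine (hsf.prod_symm.prod).congr fun n => ?_
      rw [hγu n]
      rfl
    refine ⟨hscol, ?_⟩
    calc ∑' n, (∑' m : ℕ, α m * h m n) * u ^ n
        = ∑' (n) (m), f (m, n) := tsum_congr hγu
      _ = ∑' (m) (n), f (m, n) := Summable.tsum_comm hsf
      _ = ∑' m, α m * (Fu ^ m * Gu) := tsum_congr hrowsum
      _ = ∑' m, (α m * Fu ^ m) * Gu := tsum_congr fun m => by ring
      _ = (∑' m, α m * Fu ^ m) * Gu := tsum_mul_right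
  refine ⟨fun n => tsum_nonneg fun m => mul_nonneg (hα m)
    (seqConv_nonneg (convPow_prop hμ hsμ m).1 hν n), hmain⟩

private lemma binom_term_le_one {ρ : ℝ} (h0 : 0 ≤ ρ) (h1 : ρ ≤ 1) {y n : ℕ} (hyn : y ≤ n) :
    (n.choose y : ℝ) * ρ ^ y * (1 - ρ) ^ (n - y) ≤ 1 := by
  have hpow : (1:ℝ) = ∑ k ∈ Finset.range (n + 1), ρ ^ k * (1 - ρ) ^ (n - k) * (n.choose k : ℝ) := by
    have := add_pow ρ (1 - ρ) n
    rw [show ρ + (1 - ρ) = 1 by ring, one_pow] at this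
    exact this
  have hmem : y ∈ Finset.range (n + 1) := Finset.mem_range.mpr (Nat.lt_succ_of_le hyn)
  have key := Finset.single_le_sum (f := fun k => ρ ^ k * (1 - ρ) ^ (n - k) * (n.choose k : ℝ))
    (fun k _ => mul_nonneg (mul_nonneg (pow_nonneg h0 k) (pow_nonneg (by linarith) (n - k)))
      (Nat.cast_nonneg _)) hmem
  calc (n.choose y : ℝ) * ρ ^ y * (1 - ρ) ^ (n - y)
      = ρ ^ y * (1 - ρ) ^ (n - y) * (n.choose y : ℝ) := by ring
    _ ≤ ∑ k ∈ Finset.range (n + 1), ρ ^ k * (1 - ρ) ^ (n - k) * (n.choose k : ℝ) := key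
    _ = 1 := hpow.symm

private lemma summable_aux (d : ℕ) {r : ℝ} (hr0 : 0 < r) (hr1 : r < 1) :
    Summable fun n : ℕ => ((n : ℝ) + 1) ^ d * r ^ n := by
  have h0 : Summable fun n : ℕ => (n : ℝ) ^ d * r ^ n :=
    summable_pow_mul_geometric_of_norm_lt_one d (by rwa [Real.norm_eq_abs, abs_of_pos hr0])
  have h1 : Summable fun n : ℕ => ((n + 1 : ℕ) : ℝ) ^ d * r ^ (n + 1) :=
    (summable_nat_add_iff 1).mpr h0
  refine (h1.mul_left r⁻¹).congr fun n => ?_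
  have : r ≠ 0 := ne_of_gt hr0
  push_cast
  rw [pow_succ]
  field_simp

private lemma hasDerivAt_pgf {c : ℕ → ℝ} {M : ℝ} {d : ℕ}
    (hc : ∀ n, |c n| ≤ M * ((n : ℝ) + 1) ^ d) {t : ℝ} (ht : |t| < 1) :
    Summable (fun n => c n * ((n : ℝ) * t ^ (n - 1))) ∧
    HasDerivAt (fun x : ℝ => ∑' n, c n * x ^ n)
      (∑' n, c n * ((n : ℝ) * t ^ (n - 1))) t := by
  have hM : 0 ≤ M := by
    have := (abs_nonneg (c 0)).trans (hc 0)
    simpa using this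
  set r : ℝ := (1 + |t|) / 2 with hr
  have habs := abs_nonneg t
  have hhalf : (1:ℝ)/2 ≤ r := by rw [hr]; linarith
  have hr0 : 0 < r := by linarith
  have hr1 : r < 1 := by rw [hr]; linarith
  have htr : |t| < r := by rw [hr]; linarith
  set u : ℕ → ℝ := fun n => 2 * M * (((n : ℝ) + 1) ^ (d + 1) * r ^ n) with hu
  have hsu : Summable u := (summable_aux (d + 1) hr0 hr1).mul_left (2 * M)
  have hbound : ∀ (n : ℕ) (x : ℝ), x ∈ Metric.ball (0:ℝ) r →
      ‖c n * ((n : ℝ) * x ^ (n - 1))‖ ≤ u n := by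
    intro n x hx
    have hxr : |x| ≤ r := le_of_lt (by simpa [Real.dist_eq] using hx)
    have hun : 0 ≤ u n := by
      have h1 : (0:ℝ) ≤ ((n : ℝ) + 1) ^ (d + 1) * r ^ n := by positivity
      have h2 : (0:ℝ) ≤ 2 * M * (((n : ℝ) + 1) ^ (d + 1) * r ^ n) :=
        mul_nonneg (by linarith) h1
      simpa [hu] using h2
    rw [Real.norm_eq_abs, abs_mul, abs_mul, abs_pow, Nat.abs_cast]
    cases n with
    | zero => simpa using hun
    | succ k =>
      have hsub : (k + 1) - 1 = k := rfl
      rw [hsub]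
      have hxk : |x| ^ k ≤ r ^ k := pow_le_pow_left₀ (abs_nonneg x) hxr k
      have hrk : r ^ k ≤ 2 * r ^ (k + 1) := by
        rw [pow_succ]
        nlinarith [pow_nonneg hr0.le k]
      have hcb := hc (k + 1)
      have hK : (0:ℝ) ≤ ((k + 1 : ℕ) : ℝ) := Nat.cast_nonneg _
      have hK1 : ((k + 1 : ℕ) : ℝ) ≤ ((k + 1 : ℕ) : ℝ) + 1 := by linarith
      calc |c (k + 1)| * (((k + 1 : ℕ) : ℝ) * |x| ^ k)
          ≤ (M * (((k + 1 : ℕ) : ℝ) + 1) ^ d) * (((k + 1 : ℕ) : ℝ) * |x| ^ k) := by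
            refine mul_le_mul_of_nonneg_right hcb ?_
            exact mul_nonneg hK (pow_nonneg (abs_nonneg x) k)
        _ ≤ (M * (((k + 1 : ℕ) : ℝ) + 1) ^ d) *
              ((((k + 1 : ℕ) : ℝ) + 1) * (2 * r ^ (k + 1))) := by
            refine mul_le_mul_of_nonneg_left ?_ (by positivity)
            refine mul_le_mul hK1 (le_trans hxk hrk) (pow_nonneg (abs_nonneg x) k) (by positivity)
        _ = u (k + 1) := by
            rw [hu]
            dsimp only
            rw [pow_succ]
            push_cast
            ring
  have hg0 : Summable fun n => c n * (0:ℝ) ^ n := by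
    refine summable_of_ne_finset_zero (s := {0}) fun n hn => ?_
    have : n ≠ 0 := by simpa using hn
    simp [zero_pow this]
  have hder : ∀ (n : ℕ) (x : ℝ), x ∈ Metric.ball (0:ℝ) r →
      HasDerivAt (fun x : ℝ => c n * x ^ n) (c n * ((n : ℝ) * x ^ (n - 1))) x :=
    fun n x _ => (hasDerivAt_pow n x).const_mul (c n)
  have htball : t ∈ Metric.ball (0:ℝ) r := by simpa [Real.dist_eq] using htr
  have h0ball : (0:ℝ) ∈ Metric.ball (0:ℝ) r := Metric.mem_ball_self hr0
  constructor
  · exact Summable.of_norm_bounded hsu fun n => hbound n t htball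
  · exact hasDerivAt_tsum_of_isPreconnected hsu Metric.isOpen_ball
      (convex_ball (0:ℝ) r).isPreconnected hder hbound h0ball hg0 htball

private lemma deriv_pgf_eq {c : ℕ → ℝ} {M : ℝ} {d : ℕ}
    (hc : ∀ n, |c n| ≤ M * ((n : ℝ) + 1) ^ d) {x : ℝ} (hx : |x| < 1) :
    deriv (fun u => ∑' n, c n * u ^ n) x = ∑' n : ℕ, ((n : ℝ) + 1) * c (n + 1) * x ^ n := by
  obtain ⟨hsum, hd⟩ := hasDerivAt_pgf hc hx
  rw [hd.deriv, Summable.tsum_eq_zero_add hsum]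
  simp only [Nat.cast_zero, zero_mul, mul_zero, zero_add]
  refine tsum_congr fun n => ?_
  have : (n + 1 : ℕ) - 1 = n := rfl
  rw [this]
  push_cast
  ring

private lemma iteratedDeriv_congr_of_isOpen {f g : ℝ → ℝ} {s : Set ℝ} (hs : IsOpen s)
    (hfg : ∀ x ∈ s, f x = g x) : ∀ y, ∀ x ∈ s, iteratedDeriv y f x = iteratedDeriv y g x := by
  intro y
  induction y with
  | zero => intro x hx; simpa [iteratedDeriv_zero] using hfg x hx
  | succ n ih =>
    intro x hx
    rw [iteratedDeriv_succ, iteratedDeriv_succ]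
    exact Filter.EventuallyEq.deriv_eq
      (Filter.eventually_of_mem (hs.mem_nhds hx) fun z hz => ih z hz)

private lemma iteratedDeriv_pgf :
    ∀ (yk : ℕ) (c : ℕ → ℝ) (M : ℝ) (d : ℕ), (∀ n, |c n| ≤ M * ((n : ℝ) + 1) ^ d) →
      ∀ t : ℝ, |t| < 1 →
      iteratedDeriv yk (fun u => ∑' n, c n * u ^ n) t
        = ∑' n, c (n + yk) * (((n + yk).descFactorial yk : ℕ) : ℝ) * t ^ n := by
  intro yk
  induction yk with
  | zero =>
    intro c M d hc t ht
    simp [iteratedDeriv_zero]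
  | succ y ih =>
    intro c M d hc t ht
    have hM : 0 ≤ M := by
      have := (abs_nonneg (c 0)).trans (hc 0)
      simpa using this
    rw [iteratedDeriv_succ']
    set c' : ℕ → ℝ := fun n => ((n : ℝ) + 1) * c (n + 1) with hc'def
    have hb' : ∀ n, |c' n| ≤ (2 ^ d * M) * ((n : ℝ) + 1) ^ (d + 1) := by
      intro n
      rw [hc'def]
      dsimp only
      rw [abs_mul, abs_of_nonneg (by positivity : (0:ℝ) ≤ (n : ℝ) + 1)]
      have h1 := hc (n + 1)
      push_cast at h1
      have h2 : ((n : ℝ) + 1 + 1) ^ d ≤ 2 ^ d * ((n : ℝ) + 1) ^ d := by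
        calc ((n : ℝ) + 1 + 1) ^ d ≤ (2 * ((n : ℝ) + 1)) ^ d := by
              refine pow_le_pow_left₀ (by positivity) (by push_cast; linarith [Nat.cast_nonneg (α := ℝ) n]) d
          _ = 2 ^ d * ((n : ℝ) + 1) ^ d := mul_pow 2 _ d
      have hn0 : (0:ℝ) ≤ (n : ℝ) + 1 := by positivity
      calc ((n : ℝ) + 1) * |c (n + 1)| ≤ ((n : ℝ) + 1) * (M * ((n : ℝ) + 1 + 1) ^ d) :=
            mul_le_mul_of_nonneg_left h1 hn0
        _ ≤ ((n : ℝ) + 1) * (M * (2 ^ d * ((n : ℝ) + 1) ^ d)) := by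
            refine mul_le_mul_of_nonneg_left ?_ hn0
            exact mul_le_mul_of_nonneg_left h2 hM
        _ = (2 ^ d * M) * ((n : ℝ) + 1) ^ (d + 1) := by rw [pow_succ]; ring
    have hcongr : ∀ x ∈ Metric.ball (0:ℝ) 1,
        deriv (fun u => ∑' n, c n * u ^ n) x = (fun x : ℝ => ∑' n, c' n * x ^ n) x := by
      intro x hx
      have hx1 : |x| < 1 := by simpa [Real.dist_eq] using hx
      rw [deriv_pgf_eq hc hx1]
    have ht1 : t ∈ Metric.ball (0:ℝ) 1 := by simpa [Real.dist_eq] using ht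
    rw [iteratedDeriv_congr_of_isOpen Metric.isOpen_ball hcongr y t ht1,
      ih c' (2 ^ d * M) (d + 1) hb' t ht]
    refine tsum_congr fun n => ?_
    have hD : (((n + (y + 1)).descFactorial (y + 1) : ℕ) : ℝ)
        = (((n + y : ℕ) : ℝ) + 1) * (((n + y).descFactorial y : ℕ) : ℝ) := by
      have h1 : n + (y + 1) = (n + y) + 1 := rfl
      rw [h1, Nat.succ_descFactorial_succ]
      push_cast
      ring
    rw [hD, hc'def]
    dsimp only
    have h1 : n + (y + 1) = (n + y) + 1 := rfl
    rw [h1]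
    ring

/-- The PGF forward recursion (Proposition 1): all messages are nonnegative and
summable, and for `1 ≤ k ≤ K`:
(i) `Γ_k(u) = A_{k−1}(F(u)) · G(u)` for `u ∈ [0,1]`, and
(ii) `A_k(s) = ((sρ_k)^{y_k}/y_k!) · Γ_k^{(y_k)}(s(1−ρ_k))` for `s ∈ [0,1]`. -/
theorem pgf_forward_recursion
    (μ : ℕ → ℝ) (hμnn : ∀ j, 0 ≤ μ j) (hμsum : ∑' j : ℕ, μ j = 1)
    (ν : ℕ → ℝ) (hνnn : ∀ l, 0 ≤ ν l) (hνsum : ∑' l : ℕ, ν l = 1)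
    (F : ℝ → ℝ) (hF : ∀ u, F u = ∑' j : ℕ, μ j * u ^ j)
    (G : ℝ → ℝ) (hG : ∀ u, G u = ∑' l : ℕ, ν l * u ^ l)
    (K : ℕ) (y : ℕ → ℕ) (ρ : ℕ → ℝ)
    (hρ : ∀ k, 1 ≤ k → k ≤ K → ρ k ∈ Set.Ioo (0 : ℝ) 1) :
    (∀ k ≤ K, (∀ n, 0 ≤ (fwd μ ν y ρ k).1 n) ∧ Summable (fwd μ ν y ρ k).1) ∧
    (∀ k, 1 ≤ k → k ≤ K →
      (∀ n, 0 ≤ (fwd μ ν y ρ k).2 n) ∧ Summable (fwd μ ν y ρ k).2 ∧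
      (∀ u ∈ Set.Icc (0 : ℝ) 1,
        ∑' n : ℕ, (fwd μ ν y ρ k).2 n * u ^ n =
          (∑' m : ℕ, (fwd μ ν y ρ (k - 1)).1 m * (F u) ^ m) * G u) ∧
      (∀ s ∈ Set.Icc (0 : ℝ) 1,
        ∑' n : ℕ, (fwd μ ν y ρ k).1 n * s ^ n =
          (s * ρ k) ^ (y k) / ((y k)! : ℝ) *
            iteratedDeriv (y k)
              (fun u => ∑' n : ℕ, (fwd μ ν y ρ k).2 n * u ^ n)
              (s * (1 - ρ k)))) := by
  have hsμ : Summable μ := by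
    by_contra h
    rw [tsum_eq_zero_of_not_summable h] at hμsum
    norm_num at hμsum
  have hsν : Summable ν := by
    by_contra h
    rw [tsum_eq_zero_of_not_summable h] at hνsum
    norm_num at hνsum
  -- definitional facts about fwd
  have hfwd2 : ∀ k : ℕ, (fwd μ ν y ρ (k + 1)).2
      = fun n => ∑' m : ℕ, (fwd μ ν y ρ k).1 m * seqConv (convPow μ m) ν n := fun k => rfl
  have hfwd1 : ∀ (k : ℕ) (n : ℕ), (fwd μ ν y ρ (k + 1)).1 n
      = if y (k + 1) ≤ n then
          (n.choose (y (k + 1)) : ℝ) * ρ (k + 1) ^ (y (k + 1)) *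
            (1 - ρ (k + 1)) ^ (n - y (k + 1)) * (fwd μ ν y ρ (k + 1)).2 n
        else 0 := fun k n => rfl
  -- Part 1
  have hA : ∀ k ≤ K, (∀ n, 0 ≤ (fwd μ ν y ρ k).1 n) ∧ Summable (fwd μ ν y ρ k).1 := by
    intro k
    induction k with
    | zero =>
      intro _
      have h0 : (fwd μ ν y ρ 0).1 = fun n => if n = 0 then (1:ℝ) else 0 := rfl
      constructor
      · intro n; rw [h0]; dsimp only; split <;> norm_num
      · refine summable_of_ne_finset_zero (s := {0}) fun n hn => ?_
        rw [h0]; simp at hn ⊢; intro h; exact absurd h hn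
    | succ k ih =>
      intro hk
      obtain ⟨hnn, hsum⟩ := ih (Nat.le_of_succ_le hk)
      obtain ⟨hγnn, hγmain⟩ := gamma_prop hμnn hsμ hμsum hνnn hsν hνsum hnn hsum
      have hγs : Summable (fwd μ ν y ρ (k + 1)).2 := by
        rw [hfwd2 k]
        exact ((hγmain 1 zero_le_one le_rfl).1).congr fun n => by simp
      have hγnn' : ∀ n, 0 ≤ (fwd μ ν y ρ (k + 1)).2 n := by
        rw [hfwd2 k]; exact hγnn
      obtain ⟨hρ0, hρ1⟩ := hρ (k + 1) (Nat.succ_le_succ (Nat.zero_le k)) hk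
      have hBnn : ∀ n, y (k + 1) ≤ n →
          (0:ℝ) ≤ (n.choose (y (k + 1)) : ℝ) * ρ (k + 1) ^ (y (k + 1)) *
            (1 - ρ (k + 1)) ^ (n - y (k + 1)) := by
        intro n _
        have : (0:ℝ) ≤ 1 - ρ (k + 1) := by linarith
        positivity
      have hnn' : ∀ n, 0 ≤ (fwd μ ν y ρ (k + 1)).1 n := by
        intro n
        rw [hfwd1 k n]
        split
        · next h => exact mul_nonneg (hBnn n h) (hγnn' n)
        · exact le_rfl
      refine ⟨hnn', Summable.of_nonneg_of_le hnn' (fun n => ?_) hγs⟩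
      rw [hfwd1 k n]
      split
      · next h =>
        refine mul_le_of_le_one_left (hγnn' n) ?_
        exact binom_term_le_one hρ0.le hρ1.le h
      · exact hγnn' n
  refine ⟨hA, ?_⟩
  rintro k hk1 hk2
  obtain ⟨k, rfl⟩ : ∃ k', k = k' + 1 := ⟨k - 1, (Nat.succ_pred_eq_of_pos hk1).symm⟩
  have hkK : k ≤ K := Nat.le_of_succ_le hk2
  obtain ⟨hαnn, hαsum⟩ := hA k hkK
  obtain ⟨hγnn, hγmain⟩ := gamma_prop hμnn hsμ hμsum hνnn hsν hνsum hαnn hαsum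
  have hγnn' : ∀ n, 0 ≤ (fwd μ ν y ρ (k + 1)).2 n := by rw [hfwd2 k]; exact hγnn
  have hγs : Summable (fwd μ ν y ρ (k + 1)).2 := by
    rw [hfwd2 k]
    exact ((hγmain 1 zero_le_one le_rfl).1).congr fun n => by simp
  obtain ⟨hρ0, hρ1⟩ := hρ (k + 1) (Nat.succ_le_succ (Nat.zero_le k)) hk2
  refine ⟨hγnn', hγs, ?_, ?_⟩
  · -- part (i)
    rintro u ⟨hu0, hu1⟩
    rw [hF u, hG u]
    have := (hγmain u hu0 hu1).2
    simp only [Nat.add_sub_cancel]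
    rw [hfwd2 k]
    exact this
  · -- part (ii)
    rintro s ⟨hs0, hs1⟩
    have ht0 : 0 ≤ s * (1 - ρ (k + 1)) := mul_nonneg hs0 (by linarith)
    have ht1 : |s * (1 - ρ (k + 1))| < 1 := by
      rw [abs_of_nonneg ht0]
      nlinarith
    have hbound : ∀ n, |(fwd μ ν y ρ (k + 1)).2 n|
        ≤ (∑' m, (fwd μ ν y ρ (k + 1)).2 m) * ((n : ℝ) + 1) ^ 0 := by
      intro n
      rw [pow_zero, mul_one, abs_of_nonneg (hγnn' n)]
      exact Summable.le_tsum hγs n fun j _ => hγnn' j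
    rw [iteratedDeriv_pgf (y (k + 1)) _ _ 0 hbound _ ht1]
    have hinj : Function.Injective (fun n : ℕ => n + y (k + 1)) := fun a b h => by
      simpa using h
    have hzero : Function.support (fun x => (fwd μ ν y ρ (k + 1)).1 x * s ^ x)
        ⊆ Set.range (fun n : ℕ => n + y (k + 1)) := by
      intro x hx
      rcases le_or_gt (y (k + 1)) x with h | h
      · exact ⟨x - y (k + 1), by dsimp only; omega⟩
      · exfalso
        apply hx
        dsimp only
        rw [hfwd1 k x, if_neg (by omega), zero_mul]
    have hshift : ∑' n, (fwd μ ν y ρ (k + 1)).1 (n + y (k + 1)) * s ^ (n + y (k + 1))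
        = ∑' n, (fwd μ ν y ρ (k + 1)).1 n * s ^ n :=
      Function.Injective.tsum_eq hinj hzero
    rw [← hshift, ← tsum_mul_left]
    refine tsum_congr fun n => ?_
    rw [hfwd1 k (n + y (k + 1)), if_pos (Nat.le_add_left _ _), Nat.add_sub_cancel]
    have hDF : (((n + y (k + 1)).descFactorial (y (k + 1)) : ℕ) : ℝ)
        = ((y (k + 1))! : ℝ) * ((n + y (k + 1)).choose (y (k + 1)) : ℝ) := by
      exact_mod_cast Nat.descFactorial_eq_factorial_mul_choose _ _
    have hfac : ((y (k + 1))! : ℝ) ≠ 0 := Nat.cast_ne_zero.mpr (Nat.factorial_ne_zero _)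
    rw [hDF, pow_add]
    simp only [mul_pow]
    field_simp
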